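/- Tropical reflection equation for κ = Rotateleft: for every n ≥ 3, the two composite maps K₂ ∘ R∨ ∘ K₂ ∘ R and R∨∨ ∘ K₂ ∘ R∨ ∘ K₂ agree on all pairs ((t,x), (s,y)) with t, s ∈ ℝ_{>0} and x, y ∈ (ℝ_{>0})^n. -/

import Mathlib

/- Tropical (geometric-lift) setting for the combinatorial R- and K-matrices of
Kuniba–Okado–Yamada, "Box-Ball System with Reflecting End", Appendix A.
Vectors are real-valued, indexed by `ZMod n` (coordinates modulo `n`), and
`Qr x y i` is the subtraction-free polynomial
`Q_i(x,y) = Σ_{k=1}^{n} (Π_{j=1}^{k−1} x_{i+j}) (Π_{j=k+1}^{n} y_{i+j})`,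
the geometric lift (by `(min,+) → (+,×)`) of the piecewise-linear energy. -/

namespace BBST

abbrev W (n : ℕ) := ZMod n → ℝ

variable {n : ℕ}

/-- The tropical energy polynomial
`Q_i(x,y) = Σ_{k=1}^{n} (Π_{j=1}^{k−1} x_{i+j}) · (Π_{j=k+1}^{n} y_{i+j})`. -/
def Qr (x y : W n) (i : ZMod n) : ℝ :=
  ∑ k ∈ Finset.range n,
    (∏ j ∈ Finset.range k, x (i + (j : ZMod n) + 1)) *
      ∏ j ∈ Finset.Ico (k + 1) n, y (i + (j : ZMod n) + 1)

end BBST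

namespace BBST

/-- Pairs `(t, x)` of a spectral parameter and a positive real vector. -/
abbrev AffR (n : ℕ) := ℝ × W n

/-- `P_i(x,y) = x_{i+1} + y_{i+1}`, the tropical energy of `R∨`. -/
def Pr (x y : W n) (i : ZMod n) : ℝ := x (i + 1) + y (i + 1)

/-- Tropical `R`: `((t,x),(s,y)) ↦ ((s/Q₀(x,y), ỹ), (t·Q₀(x,y), x̃))` with
`x̃_i = x_i·Q_i(x,y)/Q_{i−1}(x,y)`, `ỹ_i = y_i·Q_{i−1}(x,y)/Q_i(x,y)`. -/
noncomputable def Rt (p : AffR n × AffR n) : AffR n × AffR n :=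
  ((p.2.1 / Qr p.1.2 p.2.2 0,
      fun i => p.2.2 i * Qr p.1.2 p.2.2 (i - 1) / Qr p.1.2 p.2.2 i),
    (p.1.1 * Qr p.1.2 p.2.2 0,
      fun i => p.1.2 i * Qr p.1.2 p.2.2 i / Qr p.1.2 p.2.2 (i - 1)))

/-- Tropical `R∨`: `((t,x),(s,y)) ↦ ((s/P₀, ỹ), (t·P₀, x̃))` with
`x̃_i = x_i·P_i/P_{i−1}`, `ỹ_i = y_i·P_i/P_{i−1}`. -/
noncomputable def Rvt (p : AffR n × AffR n) : AffR n × AffR n :=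
  ((p.2.1 / Pr p.1.2 p.2.2 0,
      fun i => p.2.2 i * Pr p.1.2 p.2.2 i / Pr p.1.2 p.2.2 (i - 1)),
    (p.1.1 * Pr p.1.2 p.2.2 0,
      fun i => p.1.2 i * Pr p.1.2 p.2.2 i / Pr p.1.2 p.2.2 (i - 1)))

/-- Tropical `R∨∨`: `((t,x),(s,y)) ↦ ((s/Q₀(y,x), ỹ), (t·Q₀(y,x), x̃))` with
`x̃_i = x_i·Q_{i−1}(y,x)/Q_i(y,x)`, `ỹ_i = y_i·Q_i(y,x)/Q_{i−1}(y,x)`. -/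
noncomputable def Rvvt (p : AffR n × AffR n) : AffR n × AffR n :=
  ((p.2.1 / Qr p.2.2 p.1.2 0,
      fun i => p.2.2 i * Qr p.2.2 p.1.2 i / Qr p.2.2 p.1.2 (i - 1)),
    (p.1.1 * Qr p.2.2 p.1.2 0,
      fun i => p.1.2 i * Qr p.2.2 p.1.2 (i - 1) / Qr p.2.2 p.1.2 i))

/-- Tropical `K` for `κ =` Rotateleft: `(t,x) ↦ (1/(t·x_1), (x_2,…,x_n,x_1))`. -/
noncomputable def Kt (q : AffR n) : AffR n := (1 / (q.1 * q.2 1), fun i => q.2 (i + 1))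

/-- `K₂`: apply the tropical `K` to the second factor. -/
noncomputable def K2t (p : AffR n × AffR n) : AffR n × AffR n := (p.1, Kt p.2)

section TropicalHelpers
variable {n : ℕ}

private lemma aux2 (a b c d e : ℝ) (hc : c ≠ 0) :
    a * (c / d) * (b * e / c) = e * (a * b) / d := by
  rw [mul_div_assoc b e c, mul_mul_mul_comm, div_mul_div_comm, mul_comm d c,
    mul_div_mul_left e d hc]
  ring

private lemma aux3 (a b c d e : ℝ) (hc : c ≠ 0) :
    a * (c / d) * (b * (e / c)) = e * (a * b) / d := by
  rw [← mul_div_assoc b e c]; exact aux2 a b c d e hc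


lemma Qr_pos (hn : 0 < n) {x y : W n} (hx : ∀ i, 0 < x i) (hy : ∀ i, 0 < y i) (i : ZMod n) :
    0 < Qr x y i := by
  unfold Qr
  apply Finset.sum_pos
  · exact fun k _ => mul_pos (Finset.prod_pos fun j _ => hx _) (Finset.prod_pos fun j _ => hy _)
  · exact Finset.nonempty_range_iff.mpr hn.ne'

lemma prod_rot (f : W n) (hn : 0 < n) (c : ZMod n) :
    ∏ j ∈ Finset.range n, f (c + (j : ZMod n)) = ∏ j ∈ Finset.range n, f (c + 1 + (j : ZMod n)) := by
  obtain ⟨m, rfl⟩ : ∃ m, n = m + 1 := ⟨n - 1, (Nat.succ_pred_eq_of_pos hn).symm⟩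
  rw [Finset.prod_range_succ', Finset.prod_range_succ]
  have h0 : ((m : ZMod (m+1)) + 1) = 0 := by
    have := ZMod.natCast_self (m+1); push_cast at this; exact this
  have h1 : c + 1 + (m : ZMod (m+1)) = c := by rw [add_assoc, add_comm 1, h0, add_zero]
  rw [h1]
  congr 1
  · apply Finset.prod_congr rfl
    intro j _
    congr 1
    push_cast
    ring
  · norm_num

lemma prod_rot' (f : W n) (hn : 0 < n) (c : ZMod n) :
    ∏ j ∈ Finset.range n, f (c + (j : ZMod n) + 1)
      = ∏ j ∈ Finset.range n, f (c + 1 + (j : ZMod n) + 1) :=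
  calc ∏ j ∈ Finset.range n, f (c + (j : ZMod n) + 1)
      = ∏ j ∈ Finset.range n, f ((c + 1) + (j : ZMod n)) :=
        Finset.prod_congr rfl fun j _ => by congr 1; ring
    _ = ∏ j ∈ Finset.range n, f ((c + 1) + 1 + (j : ZMod n)) := prod_rot f hn (c + 1)
    _ = ∏ j ∈ Finset.range n, f (c + 1 + (j : ZMod n) + 1) :=
        Finset.prod_congr rfl fun j _ => by congr 1; ring

lemma tel (f g : W n) (hg : ∀ i, g i ≠ 0) (I : ZMod n) (k : ℕ) :
    ∏ j ∈ Finset.range k,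
        (f (I + (j : ZMod n) + 1) * g (I + (j : ZMod n) + 1) / g (I + (j : ZMod n))) =
      (∏ j ∈ Finset.range k, f (I + (j : ZMod n) + 1)) * (g (I + (k : ZMod n)) / g I) := by
  induction k with
  | zero => simp [div_self (hg I)]
  | succ k ih =>
    rw [Finset.prod_range_succ, Finset.prod_range_succ, ih]
    push_cast
    have h1 : g (I + ((k : ZMod n) + 1)) = g (I + (k : ZMod n) + 1) := by congr 1; ring
    rw [h1, aux2 _ _ _ _ _ (hg (I + (k : ZMod n)))]
    ring

lemma R1 (hn : 0 < n) (x y : W n) (i : ZMod n) :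
    x (i+1) * Qr x y (i+1) + ∏ j ∈ Finset.range n, y (i + (j : ZMod n) + 1)
      = y (i+1) * Qr x y i + ∏ j ∈ Finset.range n, x (i + (j : ZMod n) + 1) := by
  obtain ⟨m, rfl⟩ : ∃ m, n = m + 1 := ⟨n - 1, (Nat.succ_pred_eq_of_pos hn).symm⟩
  have h0 : ((m : ZMod (m+1)) + 1) = 0 := by
    have := ZMod.natCast_self (m+1); push_cast at this; exact this
  unfold Qr
  rw [Finset.mul_sum, Finset.mul_sum, Finset.sum_range_succ, Finset.sum_range_succ']
  have hxg : ∀ k : ℕ, ∏ j ∈ Finset.range (k+1), x (i + (j : ZMod (m+1)) + 1)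
      = x (i+1) * ∏ j ∈ Finset.range k, x (i + 1 + (j : ZMod (m+1)) + 1) := by
    intro k
    rw [Finset.prod_range_succ', mul_comm]
    congr 1
    · congr 1; push_cast; ring
    · exact Finset.prod_congr rfl fun j _ => by congr 1; push_cast; ring
  have hsum : ∀ k ∈ Finset.range m,
      x (i+1) * ((∏ j ∈ Finset.range k, x (i + 1 + (j : ZMod (m+1)) + 1)) *
        ∏ j ∈ Finset.Ico (k + 1) (m+1), y (i + 1 + (j : ZMod (m+1)) + 1))
      = y (i+1) * ((∏ j ∈ Finset.range (k+1), x (i + (j : ZMod (m+1)) + 1)) *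
        ∏ j ∈ Finset.Ico (k + 1 + 1) (m+1), y (i + (j : ZMod (m+1)) + 1)) := by
    intro k hk
    have hk' := Finset.mem_range.mp hk
    have hy : ∏ j ∈ Finset.Ico (k + 1) (m+1), y (i + 1 + (j : ZMod (m+1)) + 1)
        = y (i+1) * ∏ j ∈ Finset.Ico (k + 1 + 1) (m+1), y (i + (j : ZMod (m+1)) + 1) := by
      rw [Finset.prod_Ico_eq_prod_range, Finset.prod_Ico_eq_prod_range]
      have e1 : m + 1 - (k + 1) = (m - k - 1) + 1 := by omega
      have e2 : m + 1 - (k + 1 + 1) = m - k - 1 := by omega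
      rw [e1, e2, Finset.prod_range_succ, mul_comm (y (i+1))]
      congr 1
      · exact Finset.prod_congr rfl fun j _ => by congr 1; push_cast; ring
      · have e3 : k + 1 + (m - k - 1) = m := by omega
        rw [e3]
        congr 1
        rw [show i + 1 + (m : ZMod (m+1)) + 1 = i + 1 + ((m : ZMod (m+1)) + 1) from by ring,
          h0, add_zero]
    rw [hxg k, hy]; ring
  rw [Finset.sum_congr rfl hsum]
  have hlast : x (i+1) * ((∏ j ∈ Finset.range m, x (i + 1 + (j : ZMod (m+1)) + 1)) *
      ∏ j ∈ Finset.Ico (m + 1) (m+1), y (i + 1 + (j : ZMod (m+1)) + 1))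
      = ∏ j ∈ Finset.range (m+1), x (i + (j : ZMod (m+1)) + 1) := by
    rw [Finset.Ico_self, Finset.prod_empty, mul_one, hxg m]
  have hfirst : y (i+1) * ((∏ j ∈ Finset.range 0, x (i + (j : ZMod (m+1)) + 1)) *
      ∏ j ∈ Finset.Ico (0 + 1) (m+1), y (i + (j : ZMod (m+1)) + 1))
      = ∏ j ∈ Finset.range (m+1), y (i + (j : ZMod (m+1)) + 1) := by
    rw [Finset.range_zero, Finset.prod_empty, one_mul, Finset.prod_range_succ', mul_comm]
    congr 1
    · rw [Finset.prod_Ico_eq_prod_range]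
      simp only [Nat.add_sub_cancel]
      exact Finset.prod_congr rfl fun j _ => by congr 1; push_cast; ring
    · congr 1; push_cast; ring
  rw [hlast, hfirst]
  ring

lemma idB (hn : 0 < n) (x y : W n) (i : ZMod n) :
    y (i+1) * Qr x y i + x (i+1+1) * Qr x y (i+1+1)
      = (x (i+1) + y (i+1+1)) * Qr x y (i+1) := by
  have r1 := R1 hn x y i
  have r2 := R1 hn x y (i+1)
  rw [← prod_rot' x hn i, ← prod_rot' y hn i] at r2
  linarith

lemma idA (x y P : W n) (hP : ∀ i, P i ≠ 0) (i : ZMod n) :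
    Qr (fun m => x (m+1) * P (m+1) / P m) (fun m => y (m+1) * P m / P (m-1)) i
      = P i * Qr x y (i+1) / P (i+1) := by
  unfold Qr
  rw [Finset.mul_sum, Finset.sum_div]
  apply Finset.sum_congr rfl
  intro k hk
  have hk' : k < n := Finset.mem_range.mp hk
  have hxp : ∏ j ∈ Finset.range k, (fun m => x (m+1) * P (m+1) / P m) (i + (j:ZMod n) + 1)
      = (∏ j ∈ Finset.range k, x (i + 1 + (j:ZMod n) + 1)) * (P (i + 1 + (k:ZMod n)) / P (i+1)) := by
    rw [← tel x P hP (i+1) k]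
    apply Finset.prod_congr rfl
    intro j _
    simp only
    rw [show i + (j:ZMod n) + 1 = i + 1 + (j:ZMod n) from by ring]
  have hyp : ∏ j ∈ Finset.Ico (k+1) n, (fun m => y (m+1) * P m / P (m-1)) (i + (j:ZMod n) + 1)
      = (∏ j ∈ Finset.Ico (k+1) n, y (i + 1 + (j:ZMod n) + 1)) * (P i / P (i + 1 + (k : ZMod n))) := by
    rw [Finset.prod_Ico_eq_prod_range, Finset.prod_Ico_eq_prod_range]
    have step1 : ∏ j ∈ Finset.range (n - (k+1)),
        (fun m => y (m+1) * P m / P (m-1)) (i + ((k + 1 + j : ℕ):ZMod n) + 1)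
        = ∏ j ∈ Finset.range (n - (k+1)),
          ((fun m => y (m+1)) ((i + ((k+1:ℕ):ZMod n)) + (j:ZMod n) + 1)
            * P ((i + ((k+1:ℕ):ZMod n)) + (j:ZMod n) + 1) / P ((i + ((k+1:ℕ):ZMod n)) + (j:ZMod n))) := by
      apply Finset.prod_congr rfl
      intro j _
      simp only
      congr 2
      · congr 1; push_cast; ring
      · congr 1; push_cast; ring
      · congr 1; push_cast; ring
    rw [step1, tel (fun m => y (m+1)) P hP (i + ((k+1:ℕ):ZMod n)) (n - (k+1))]
    congr 1
    · apply Finset.prod_congr rfl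
      intro j _
      show y _ = y _
      congr 1; push_cast; ring
    · congr 2
      · rw [show ((n - (k+1) : ℕ) : ZMod n) = ((n:ℕ):ZMod n) - ((k+1:ℕ):ZMod n) from by
          push_cast [Nat.cast_sub hk']; ring]
        rw [ZMod.natCast_self]
        ring
      · push_cast; ring
  rw [hxp, hyp, aux3 _ _ _ _ _ (hP (i + 1 + (k:ZMod n)))]


end TropicalHelpers

/-- tropical reflection equation, `κ =` Rotateleft: for every `n ≥ 3`,
the composites `K₂ ∘ R∨ ∘ K₂ ∘ R` and `R∨∨ ∘ K₂ ∘ R∨ ∘ K₂` agree on all pairs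
`((t,x),(s,y))` with `t, s > 0` and `x, y` positive vectors. -/
theorem tropical_reflection_rotateleft (n : ℕ) (hn : 3 ≤ n)
    (t s : ℝ) (ht : 0 < t) (hs : 0 < s) (x y : W n)
    (hx : ∀ i, 0 < x i) (hy : ∀ i, 0 < y i) :
    K2t (Rvt (K2t (Rt ((t, x), (s, y))))) = Rvvt (K2t (Rvt (K2t ((t, x), (s, y))))) := by
  have hn0 : 0 < n := by omega
  have hQ : ∀ i, Qr x y i ≠ 0 := fun i => (Qr_pos hn0 hx hy i).ne'
  have hPp : ∀ i, Pr x (fun i => y (i+1)) i ≠ 0 := by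
    intro i; unfold Pr; exact (add_pos (hx _) (hy _)).ne'
  have ht' := ht.ne'
  have hs' := hs.ne'
  have hx' : ∀ i, x i ≠ 0 := fun i => (hx i).ne'
  have hy' : ∀ i, y i ≠ 0 := fun i => (hy i).ne'
  simp only [Rt, Rvt, Rvvt, K2t, Kt, Prod.mk.injEq, add_sub_cancel_right, sub_self]
  have hPrL : ∀ z : ZMod n,
      Pr (fun i => y i * Qr x y (i-1) / Qr x y i) (fun i => x (i+1) * Qr x y (i+1) / Qr x y i) z
        = Pr x (fun i => y (i+1)) z := by
    intro z
    unfold Pr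
    simp only
    rw [add_sub_cancel_right, ← add_div, idB hn0 x y z,
      mul_div_cancel_right₀ _ (hQ (z+1))]
  have hA : ∀ z : ZMod n,
      Qr (fun i => x (i+1) * Pr x (fun i => y (i+1)) (i+1) / Pr x (fun i => y (i+1)) i)
         (fun i => y (i+1) * Pr x (fun i => y (i+1)) i / Pr x (fun i => y (i+1)) (i-1)) z
        = Pr x (fun i => y (i+1)) z * Qr x y (z+1) / Pr x (fun i => y (i+1)) (z+1) :=
    fun z => idA x y (Pr x (fun i => y (i+1))) hPp z
  refine ⟨⟨?_, ?_⟩, ?_, ?_⟩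
  · rw [hPrL 0, hA 0]
    simp only [zero_add]
    have h1 := hPp 0; have h2 := hPp 1; have h3 := hQ 0; have h4 := hQ 1
    have h5 := hx' 1
    field_simp
  · funext i
    rw [hPrL i, hPrL (i-1), hA i, hA (i-1)]
    simp only [sub_add_cancel]
    have h1 := hPp i; have h2 := hPp (i-1); have h3 := hPp (i+1)
    have h4 := hQ i; have h5 := hQ (i+1); have h6 := hx' (i+1)
    field_simp
  · rw [hPrL 0, hPrL 1, hA 0]
    simp only [zero_add]
    have h1 := hPp 0; have h2 := hPp 1; have h3 := hQ 0; have h4 := hQ 1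
    have h5 := hy' 1
    field_simp
  · funext i
    rw [hPrL (i+1), hPrL i, hA (i-1), hA i]
    simp only [sub_add_cancel]
    have h1 := hPp i; have h2 := hPp (i-1); have h3 := hPp (i+1)
    have h4 := hQ i; have h5 := hQ (i+1); have h6 := hy' (i+1)
    field_simp


end BBST
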